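/- Let X and A be metric spaces, let φ : X × [0,∞) → X and l : X × A → X be continuous, let α > 0, let u : X → ℝ be bounded and continuous, and let c ∈ ℝ. Then the function F on X × [0,∞] × A defined by F(x,θ,a) := e^{−αθ}·u(l(φ(x,θ),a)) + (1 − e^{−αθ})·c for θ < ∞ and F(x,∞,a) := c is continuous, where [0,∞] is the one-point compactification of [0,∞). -/

import Mathlib

open MeasureTheory Filter Set Bornology
open scoped NNReal ENNReal Topology

/-- The discount factor, extended by `0` at `∞`, tends to `0` at `∞`. -/
lemma aux_tendsto_E {α : ℝ} (hα : 0 < α) :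
    Tendsto (fun θ : ℝ≥0∞ => if θ = ∞ then 0 else Real.exp (-α * θ.toReal))
      (𝓝 ∞) (𝓝 0) := by
  rw [Metric.tendsto_nhds]
  intro ε hε
  have h1 : Tendsto (fun t : ℝ => Real.exp (-α * t)) atTop (𝓝 0) :=
    Real.tendsto_exp_atBot.comp
      (tendsto_const_mul_atBot_of_neg (neg_neg_iff_pos.2 hα) |>.2 tendsto_id)
  obtain ⟨t₀, ht₀0, ht₀⟩ : ∃ t₀ : ℝ, 0 ≤ t₀ ∧ Real.exp (-α * t₀) < ε := by
    have := (h1.eventually (gt_mem_nhds hε)).and (eventually_ge_atTop (0:ℝ))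
    obtain ⟨t₀, h1, h2⟩ := this.exists
    exact ⟨t₀, h2, h1⟩
  filter_upwards [Ioi_mem_nhds (show (ENNReal.ofReal t₀) < ∞ from ENNReal.ofReal_lt_top)]
    with θ hθ
  by_cases h : θ = ∞
  · simpa [h] using hε
  · rw [if_neg h, Real.dist_eq, sub_zero, abs_of_pos (Real.exp_pos _)]
    have hle : t₀ ≤ θ.toReal := by
      have := ENNReal.toReal_mono h (le_of_lt hθ)
      rwa [ENNReal.toReal_ofReal ht₀0] at this
    calc Real.exp (-α * θ.toReal) ≤ Real.exp (-α * t₀) :=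
          Real.exp_le_exp.2 (by nlinarith)
      _ < ε := ht₀

/-- Let `X`, `A` be metric spaces, `φ : X × [0,∞) → X` and
`l : X × A → X` continuous, `α > 0`, `u : X → ℝ` bounded and continuous, `c ∈ ℝ`.
Then the function `F` on `X × [0,∞] × A` defined by
`F(x,θ,a) = e^{-αθ} u(l(φ(x,θ),a)) + (1 - e^{-αθ}) c` for `θ < ∞` and
`F(x,∞,a) = c` is continuous, where `[0,∞]` is the one-point compactification
of `[0,∞)` (realized as `ℝ≥0∞`). -/
theorem stmt2 {X A : Type*} [MetricSpace X] [MetricSpace A]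
    (φ : X × ℝ≥0 → X) (hφ : Continuous φ)
    (l : X × A → X) (hl : Continuous l) (α : ℝ) (hα : 0 < α)
    (u : X → ℝ) (hu : Continuous u) (hub : IsBounded (Set.range u)) (c : ℝ) :
    Continuous (fun p : X × ℝ≥0∞ × A =>
      if p.2.1 = ∞ then c
      else Real.exp (-α * (p.2.1).toReal) * u (l (φ (p.1, (p.2.1).toNNReal), p.2.2))
        + (1 - Real.exp (-α * (p.2.1).toReal)) * c) := by
  obtain ⟨M, hM⟩ := hub.exists_norm_le
  set g := fun p : X × ℝ≥0∞ × A =>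
      if p.2.1 = ∞ then c
      else Real.exp (-α * (p.2.1).toReal) * u (l (φ (p.1, (p.2.1).toNNReal), p.2.2))
        + (1 - Real.exp (-α * (p.2.1).toReal)) * c with hg
  rw [continuous_iff_continuousAt]
  rintro ⟨x, θ, a⟩
  by_cases hθ : θ = ∞
  · subst hθ
    have hgpt : g (x, ∞, a) = c := if_pos rfl
    rw [ContinuousAt, hgpt]
    -- squeeze: |g p - c| ≤ (M + |c|) * E p.2.1
    set E : ℝ≥0∞ → ℝ := fun θ => if θ = ∞ then 0 else Real.exp (-α * θ.toReal) with hE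
    have hEt : Tendsto (fun p : X × ℝ≥0∞ × A => (M + |c|) * E p.2.1)
        (𝓝 (x, ∞, a)) (𝓝 0) := by
      have h2 : Tendsto (fun p : X × ℝ≥0∞ × A => p.2.1) (𝓝 (x, ∞, a)) (𝓝 ∞) :=
        (continuous_fst.comp continuous_snd).continuousAt
      simpa only [Function.comp_def, mul_zero] using
        ((aux_tendsto_E hα).comp h2).const_mul (M + |c|)
    have hbound : ∀ p : X × ℝ≥0∞ × A, ‖g p - c‖ ≤ (M + |c|) * E p.2.1 := by
      intro p
      by_cases h : p.2.1 = ∞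
      · simp [hg, hE, h]
      · rw [hg, hE]
        simp only [if_neg h]
        have hMu : ‖u (l (φ (p.1, (p.2.1).toNNReal), p.2.2))‖ ≤ M :=
          hM _ (mem_range_self _)
        rw [Real.norm_eq_abs] at hMu ⊢
        have hep := Real.exp_pos (-α * (p.2.1).toReal)
        have heq : Real.exp (-α * (p.2.1).toReal) *
            u (l (φ (p.1, (p.2.1).toNNReal), p.2.2))
            + (1 - Real.exp (-α * (p.2.1).toReal)) * c - c
            = Real.exp (-α * (p.2.1).toReal) *
              (u (l (φ (p.1, (p.2.1).toNNReal), p.2.2)) - c) := by ring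
        rw [heq, abs_mul, abs_of_pos hep]
        have : |u (l (φ (p.1, (p.2.1).toNNReal), p.2.2)) - c| ≤ M + |c| := by
          calc _ ≤ |u (l (φ (p.1, (p.2.1).toNNReal), p.2.2))| + |c| := abs_sub _ _
            _ ≤ M + |c| := by linarith
        calc Real.exp (-α * (p.2.1).toReal) *
              |u (l (φ (p.1, (p.2.1).toNNReal), p.2.2)) - c|
            ≤ Real.exp (-α * (p.2.1).toReal) * (M + |c|) := by nlinarith
          _ = (M + |c|) * Real.exp (-α * (p.2.1).toReal) := mul_comm _ _
    have h0 : Tendsto (fun p => g p - c) (𝓝 (x, ∞, a)) (𝓝 0) :=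
      squeeze_zero_norm hbound hEt
    have hc : Tendsto (fun _ : X × ℝ≥0∞ × A => c) (𝓝 (x, ∞, a)) (𝓝 c) :=
      tendsto_const_nhds
    simpa using h0.add hc
  · -- away from ∞, the function agrees with an explicitly continuous one
    have htN : ContinuousAt (fun p : X × ℝ≥0∞ × A => (p.2.1).toNNReal) (x, θ, a) :=
      (ENNReal.tendsto_toNNReal hθ).comp
        (continuous_fst.comp continuous_snd).continuousAt
    have htR : ContinuousAt (fun p : X × ℝ≥0∞ × A => (p.2.1).toReal) (x, θ, a) :=
      (ENNReal.continuousAt_toReal hθ).comp (f := fun p : X × ℝ≥0∞ × A => p.2.1)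
          (x := (x, θ, a))
        (continuous_fst.comp continuous_snd).continuousAt
    have hexp : ContinuousAt
        (fun p : X × ℝ≥0∞ × A => Real.exp (-α * (p.2.1).toReal)) (x, θ, a) :=
      Real.continuous_exp.continuousAt.comp (continuousAt_const.mul htR)
    have hin : ContinuousAt
        (fun p : X × ℝ≥0∞ × A => u (l (φ (p.1, (p.2.1).toNNReal), p.2.2)))
        (x, θ, a) :=
      hu.continuousAt.comp <| hl.continuousAt.comp <|
        ((hφ.continuousAt.comp (continuousAt_fst.prodMk htN)).prodMk
          (continuous_snd.comp continuous_snd).continuousAt)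
    have hh : ContinuousAt
        (fun p : X × ℝ≥0∞ × A => Real.exp (-α * (p.2.1).toReal) *
          u (l (φ (p.1, (p.2.1).toNNReal), p.2.2))
          + (1 - Real.exp (-α * (p.2.1).toReal)) * c) (x, θ, a) :=
      (hexp.mul hin).add ((continuousAt_const.sub hexp).mul continuousAt_const)
    refine hh.congr ?_
    have hopen : IsOpen {p : X × ℝ≥0∞ × A | p.2.1 ≠ ∞} :=
      (isClosed_singleton.preimage (continuous_fst.comp continuous_snd)).isOpen_compl
    filter_upwards [hopen.mem_nhds hθ] with p hp
    exact (if_neg hp).symm
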